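/- For every N > 0 and t > 0, sup_{ε > 0} E [ (1/ε) ∫₀ᵗ σ̂²(ε⁻¹W₁(s)) 𝟙_{{|ε⁻¹W₁(s)| > N}} ds ] ≤ C ‖σ̂² 𝟙_{{|x| > N}}‖_{L¹(ℝ)} √t for an absolute constant C; in particular, since σ̂² ∈ L¹(ℝ), this bound tends to 0 as N → ∞ uniformly in ε. -/

import Mathlib

open MeasureTheory ProbabilityTheory Filter Set Topology Matrix
open scoped Classical

noncomputable section

namespace PGS

variable {Ω : Type*} {mΩ : MeasurableSpace Ω}

/-- vectors in `ℝ^d` -/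
abbrev Vec (d : ℕ) := Fin d → ℝ

/-- `d × d` real matrices -/
abbrev Mat (d : ℕ) := Matrix (Fin d) (Fin d) ℝ

/-- Euclidean inner product -/
def dotp {d : ℕ} (v w : Vec d) : ℝ := ∑ i, v i * w i

/-- a one-dimensional standard Brownian motion: starts at `0`, has a.s. continuous paths, and has
independent Gaussian increments `W t - W s ~ N(0, t - s)`. -/
def IsBM (P : Measure Ω) (W : Ω → ℝ → ℝ) : Prop :=
  (∀ ω, W ω 0 = 0) ∧
  (∀ t : ℝ, Measurable fun ω => W ω t) ∧
  (∀ᵐ ω ∂P, Continuous (W ω)) ∧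
  (∀ s t : ℝ, 0 ≤ s → s ≤ t →
    P.map (fun ω => W ω t - W ω s) = gaussianReal 0 (Real.toNNReal (t - s))) ∧
  (∀ (n : ℕ) (t : ℕ → ℝ), Monotone t → 0 ≤ t 0 →
    iIndepFun
      (fun (i : Fin n) ω => W ω (t (i + 1)) - W ω (t i)) P)

/-- a `d`-dimensional standard Brownian motion: the coordinates are independent one-dimensional
standard Brownian motions. -/
def IsBMVec (d : ℕ) (P : Measure Ω) (W : Ω → ℝ → Vec d) : Prop :=
  (∀ i, IsBM P fun ω t => W ω t i) ∧
  iIndepFun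
    (fun (i : Fin d) ω => fun t => W ω t i) P

/-- the local time field `L ω t x` of the process `X`, characterized as the occupation density:
`∫₀ᵗ g(X s) ds = ∫ g(a) L(t, a) da`. -/
def IsLocalTime (P : Measure Ω) (X : Ω → ℝ → ℝ) (L : Ω → ℝ → ℝ → ℝ) : Prop :=
  (∀ t x, Measurable fun ω => L ω t x) ∧
  ∀ᵐ ω ∂P,
    (∀ x, Monotone fun t => L ω t x) ∧
    (∀ x, L ω 0 x = 0) ∧
    (Continuous fun p : ℝ × ℝ => L ω p.1 p.2) ∧
    ∀ g : ℝ → ℝ, Measurable g → (∃ C, ∀ x, |g x| ≤ C) → ∀ t, 0 ≤ t →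
      ∫ s in Icc (0:ℝ) t, g (X ω s) = ∫ a, g a * L ω t a

/-- the local time (with respect to quadratic-variation time) of a process whose quadratic
variation is `⟨X⟩ t = ∫₀ᵗ w(s) ds`:  `∫₀ᵗ g(X s) d⟨X⟩ s = ∫ g(a) L(t, a) da`. -/
def IsWeightedLocalTime (P : Measure Ω) (X : Ω → ℝ → ℝ) (w : ℝ → ℝ)
    (L : Ω → ℝ → ℝ → ℝ) : Prop :=
  (∀ t x, Measurable fun ω => L ω t x) ∧
  ∀ᵐ ω ∂P,
    (∀ x, Monotone fun t => L ω t x) ∧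
    (∀ x, L ω 0 x = 0) ∧
    ∀ g : ℝ → ℝ, Measurable g → (∃ C, ∀ x, |g x| ≤ C) → ∀ t, 0 ≤ t →
      ∫ s in Icc (0:ℝ) t, g (X ω s) * w s = ∫ a, g a * L ω t a

/-- the Lebesgue–Stieltjes measure associated to a monotone function `F` (junk value `0` if `F`
is not monotone). -/
def lsMeasure (F : ℝ → ℝ) : Measure ℝ :=
  if h : Monotone F then h.stieltjesFunction.measure else 0

/-- the Riemann–Stieltjes (Lebesgue–Stieltjes) integral `∫₀ᵗ g dF`. -/
def rsInt (F : ℝ → ℝ) (g : ℝ → ℝ) (t : ℝ) : ℝ :=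
  ∫ s in Icc (0:ℝ) t, g s ∂(lsMeasure F)

/-- the vector-valued Riemann–Stieltjes integral `∫₀ᵗ g dF`. -/
def rsIntVec {d : ℕ} (F : ℝ → ℝ) (g : ℝ → Vec d) (t : ℝ) : Vec d :=
  fun i => ∫ s in Icc (0:ℝ) t, g s i ∂(lsMeasure F)

/-- the square root of a positive semidefinite matrix (junk value `0` otherwise). -/
def msqrt {d : ℕ} (A : Mat d) : Mat d :=
  if h : A.PosSemidef then
    h.1.eigenvectorUnitary.1 * Matrix.diagonal (RCLike.ofReal ∘ Real.sqrt ∘ h.1.eigenvalues) *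
      (star h.1.eigenvectorUnitary : Mat d) else 0

/-- a real-valued process which is a martingale on `[0, ∞)` for the filtration `ℱ`. -/
def IsMartOn (P : Measure Ω) (ℱ : Filtration ℝ mΩ) (f : ℝ → Ω → ℝ) : Prop :=
  (∀ t, 0 ≤ t → Integrable (f t) P) ∧
  (∀ t, 0 ≤ t → StronglyMeasurable[ℱ t] (f t)) ∧
  ∀ s t : ℝ, 0 ≤ s → s ≤ t → P[f t | ℱ s] =ᵐ[P] f s

/-- a Brownian motion adapted to the filtration `ℱ` whose increments are independent of the past. -/
def IsFilteredBM (P : Measure Ω) (ℱ : Filtration ℝ mΩ) (W : Ω → ℝ → ℝ) : Prop :=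
  IsBM P W ∧ (∀ t, 0 ≤ t → StronglyMeasurable[ℱ t] fun ω => W ω t) ∧
  ∀ s t : ℝ, 0 ≤ s → s ≤ t →
    Indep (MeasurableSpace.comap (fun ω => W ω t - W ω s) inferInstance) (ℱ s) P

/-- a `d`-dimensional Brownian motion adapted to the filtration `ℱ` whose increments are
independent of the past. -/
def IsFilteredBMVec (d : ℕ) (P : Measure Ω) (ℱ : Filtration ℝ mΩ)
    (W : Ω → ℝ → Vec d) : Prop :=
  IsBMVec d P W ∧ (∀ t, 0 ≤ t → StronglyMeasurable[ℱ t] fun ω => W ω t) ∧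
  ∀ s t : ℝ, 0 ≤ s → s ≤ t →
    Indep (MeasurableSpace.comap (fun ω => W ω t - W ω s) inferInstance) (ℱ s) P

/-- `M t = ∫₀ᵗ H s dW s` : characterization of the (real-valued) Itô stochastic integral of an
adapted process `H` against a Brownian motion `W`, via the standard martingale characterization:
`M` is a continuous martingale vanishing at `0`, the covariation of `M` with `W` is `∫₀ᵗ H ds`
(i.e. `M W - ∫₀ᵗ H ds` is a martingale), and the quadratic variation of `M` is `∫₀ᵗ H² ds`. -/
def IsItoIntegral (P : Measure Ω) (ℱ : Filtration ℝ mΩ) (W : Ω → ℝ → ℝ)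
    (H : Ω → ℝ → ℝ) (M : Ω → ℝ → ℝ) : Prop :=
  (∀ ω, M ω 0 = 0) ∧ (∀ᵐ ω ∂P, Continuous (M ω)) ∧
  (∀ t, 0 ≤ t → MemLp (fun ω => M ω t) 2 P) ∧
  IsMartOn P ℱ (fun t ω => M ω t) ∧
  IsMartOn P ℱ (fun t ω => M ω t * W ω t - ∫ s in Icc (0:ℝ) t, H ω s) ∧
  IsMartOn P ℱ (fun t ω => M ω t ^ 2 - ∫ s in Icc (0:ℝ) t, (H ω s) ^ 2)

/-- `M t = ∫₀ᵗ H s dW s` : characterization of the vector-valued Itô integral of a matrix-valued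
adapted process `H` against an `r`-dimensional Brownian motion `W`, via the martingale
characterization of its components, covariations with `W`, and quadratic covariations. -/
def IsItoIntegralVec (d r : ℕ) (P : Measure Ω) (ℱ : Filtration ℝ mΩ)
    (W : Ω → ℝ → Vec r) (H : Ω → ℝ → Matrix (Fin d) (Fin r) ℝ)
    (M : Ω → ℝ → Vec d) : Prop :=
  (∀ ω, M ω 0 = 0) ∧ (∀ᵐ ω ∂P, Continuous (M ω)) ∧
  (∀ t, 0 ≤ t → ∀ i, MemLp (fun ω => M ω t i) 2 P) ∧
  (∀ i, IsMartOn P ℱ (fun t ω => M ω t i)) ∧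
  (∀ i j, IsMartOn P ℱ
    (fun t ω => M ω t i * W ω t j - ∫ s in Icc (0:ℝ) t, H ω s i j)) ∧
  (∀ i j, IsMartOn P ℱ
    (fun t ω => M ω t i * M ω t j - ∫ s in Icc (0:ℝ) t, (H ω s * (H ω s)ᵀ) i j))

/-- `Y` solves the slow SDE
`dY = [b₁(Y) + b₂(ε⁻¹ W₁(t), Y)] dt + σ(ε⁻¹ W₁(t), Y) dW₂`, `Y 0 = y₀`. -/
def SolvesSlowSDE (d : ℕ) (P : Measure Ω) (W₁ : Ω → ℝ → ℝ) (W₂ : Ω → ℝ → Vec d)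
    (b₁ : Vec d → Vec d) (b₂ : ℝ → Vec d → Vec d) (σ : ℝ → Vec d → Mat d)
    (y₀ : Vec d) (ε : ℝ) (Y : Ω → ℝ → Vec d) : Prop :=
  ∃ ℱ : Filtration ℝ mΩ, IsFilteredBM P ℱ W₁ ∧ IsFilteredBMVec d P ℱ W₂ ∧
    (∀ t, 0 ≤ t → StronglyMeasurable[ℱ t] fun ω => Y ω t) ∧
    (∀ᵐ ω ∂P, Continuous (Y ω)) ∧
    ∃ M : Ω → ℝ → Vec d,
      IsItoIntegralVec d d P ℱ W₂ (fun ω s => σ (ε⁻¹ * W₁ ω s) (Y ω s)) M ∧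
      ∀ᵐ ω ∂P, ∀ t, 0 ≤ t →
        Y ω t = y₀ + (∫ s in Icc (0:ℝ) t,
          (b₁ (Y ω s) + b₂ (ε⁻¹ * W₁ ω s) (Y ω s))) + M ω t

/-- `(X, Y)` solves the fast–slow system
`dX = ε⁻¹ [ψ₁(Y) + ψ₂(X, Y)] dW₁`, `X 0 = 0`,
`dY = [b₁(Y) + b₂(X, Y)] dt + σ(X, Y) dW₂`, `Y 0 = y₀`. -/
def SolvesFastSlow (d : ℕ) (P : Measure Ω) (W₁ : Ω → ℝ → ℝ) (W₂ : Ω → ℝ → Vec d)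
    (ψ₁ : Vec d → ℝ) (ψ₂ : ℝ → Vec d → ℝ)
    (b₁ : Vec d → Vec d) (b₂ : ℝ → Vec d → Vec d) (σ : ℝ → Vec d → Mat d)
    (y₀ : Vec d) (ε : ℝ) (X : Ω → ℝ → ℝ) (Y : Ω → ℝ → Vec d) : Prop :=
  ∃ ℱ : Filtration ℝ mΩ, IsFilteredBM P ℱ W₁ ∧ IsFilteredBMVec d P ℱ W₂ ∧
    (∀ t, 0 ≤ t → StronglyMeasurable[ℱ t] fun ω => X ω t) ∧
    (∀ t, 0 ≤ t → StronglyMeasurable[ℱ t] fun ω => Y ω t) ∧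
    (∀ᵐ ω ∂P, Continuous (X ω) ∧ Continuous (Y ω)) ∧
    IsItoIntegral P ℱ W₁ (fun ω t => ε⁻¹ * (ψ₁ (Y ω t) + ψ₂ (X ω t) (Y ω t))) X ∧
    ∃ M : Ω → ℝ → Vec d,
      IsItoIntegralVec d d P ℱ W₂ (fun ω s => σ (X ω s) (Y ω s)) M ∧
      ∀ᵐ ω ∂P, ∀ t, 0 ≤ t →
        Y ω t = y₀ + (∫ s in Icc (0:ℝ) t,
          (b₁ (Y ω s) + b₂ (X ω s) (Y ω s))) + M ω t

/-- the path space `C([0,∞), ℝ^d)`, realized as functions `ℝ → ℝ^d` with the topology of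
uniform convergence on compact sets. -/
abbrev PathSp (d : ℕ) := UniformOnFun ℝ (Vec d) {K : Set ℝ | IsCompact K}

abbrev toPath {d : ℕ} (f : ℝ → Vec d) : PathSp d :=
  UniformOnFun.ofFun {K : Set ℝ | IsCompact K} f

/-- the path space of real-valued paths with the topology of uniform convergence on compacts. -/
abbrev PathSp1 := UniformOnFun ℝ ℝ {K : Set ℝ | IsCompact K}

abbrev toPath1 (f : ℝ → ℝ) : PathSp1 :=
  UniformOnFun.ofFun {K : Set ℝ | IsCompact K} f

/-- the path space `C([0,T], ℝ^d)`, realized as functions `ℝ → ℝ^d` with the topology of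
uniform convergence on `[0,T]`. -/
abbrev PathSpT (d : ℕ) (T : ℝ) := UniformOnFun ℝ (Vec d) {Icc (0:ℝ) T}

abbrev toPathT {d : ℕ} (T : ℝ) (f : ℝ → Vec d) : PathSpT d T :=
  UniformOnFun.ofFun {Icc (0:ℝ) T} f

/-- convergence in distribution (weak convergence of laws), as `ε → 0⁺`, of the `E`-valued random
elements `X ε` (on `(Ω, P)`) to the random element `Z` (on `(Ω', P')`): the expectations of every
bounded continuous functional converge. -/
def TendstoInLaw {Ω' : Type*} [MeasurableSpace Ω'] {E : Type*} [TopologicalSpace E]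
    (P : Measure Ω) (X : ℝ → Ω → E) (P' : Measure Ω') (Z : Ω' → E) : Prop :=
  ∀ f : E → ℝ, Continuous f → (∃ C, ∀ x, |f x| ≤ C) →
    Tendsto (fun ε => ∫ ω, f (X ε ω) ∂P) (nhdsWithin 0 (Ioi 0))
      (𝓝 (∫ ω, f (Z ω) ∂P'))

/-- `J t = ∫₀ᵗ ψ(s) dV(s)` with `V(t) = W(F(t))` for a `d`-dimensional Brownian motion `W`
independent of the conditioning process `G`: conditionally on `G`, the process `J` is centered
Gaussian with conditional covariance `Cov(J t, J t') = ∫₀^{min(t,t')} ψ ψᵀ dF`, expressed through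
the conditional characteristic functions of the finite-dimensional distributions. -/
def IsCondGaussDriven (d : ℕ) (P : Measure Ω) (G : Ω → ℝ → ℝ) (F : Ω → ℝ → ℝ)
    (ψ : ℝ → Mat d) (J : Ω → ℝ → Vec d) : Prop :=
  ∀ (n : ℕ) (t : Fin n → ℝ) (l : Fin n → Vec d), (∀ k, 0 ≤ t k) →
    (P[fun ω => Complex.exp (Complex.I * (∑ k, dotp (l k) (J ω (t k)) : ℝ)) |
        MeasurableSpace.comap G inferInstance])
      =ᵐ[P] fun ω => Complex.exp (↑(-(1/2 : ℝ) * ∑ k, ∑ k',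
          rsInt (F ω) (fun s => dotp ((ψ s * (ψ s)ᵀ).mulVec (l k)) (l k'))
            (min (t k) (t k'))))

/-- `ζ` solves the linear equation `ζ(t) = ∫₀ᵗ D b₁(y(s)) ζ(s) ds + J(t)`, `ζ(0) = 0`,
with a.s. continuous paths. -/
def SolvesLinear (d : ℕ) (P : Measure Ω) (b₁ : Vec d → Vec d) (y : ℝ → Vec d)
    (J : Ω → ℝ → Vec d) (ζ : Ω → ℝ → Vec d) : Prop :=
  ∀ᵐ ω ∂P, Continuous (ζ ω) ∧ ζ ω 0 = 0 ∧
    ∀ t, 0 ≤ t →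
      ζ ω t = (∫ s in Icc (0:ℝ) t, fderiv ℝ b₁ (y s) (ζ ω s)) + J ω t

/-- a matrix-valued step function, given by partition points `pts 0 ≤ pts 1 ≤ ...` and
values `coef k` on `[pts k, pts (k+1))`. -/
structure StepMat (d : ℕ) where
  n : ℕ
  pts : ℕ → ℝ
  coef : ℕ → Mat d

/-- the step function `ℝ → Mat d` associated to the data `S`. -/
def StepMat.fn {d : ℕ} (S : StepMat d) : ℝ → Mat d := fun s =>
  ∑ k ∈ Finset.range S.n, if s ∈ Ico (S.pts k) (S.pts (k + 1)) then S.coef k else 0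

/-- the elementary stochastic integral `∫ S.fn dV = ∑ₖ ψₖ (V(t_{k+1}) − V(tₖ))` of a step
function against a vector-valued process `V`. -/
def StepMat.itg {d : ℕ} {Ω : Type*} (S : StepMat d) (V : Ω → ℝ → Vec d) (ω : Ω) : Vec d :=
  ∑ k ∈ Finset.range S.n, (S.coef k).mulVec (V ω (S.pts (k + 1)) - V ω (S.pts k))

open scoped NNReal ENNReal

lemma aux_ofReal_int_le {α : Type*} [MeasurableSpace α] (μ : Measure α) (f : α → ℝ)
    (hf : ∀ x, 0 ≤ f x) :
    ENNReal.ofReal (∫ x, f x ∂μ) ≤ ∫⁻ x, ENNReal.ofReal (f x) ∂μ := by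
  by_cases hfi : Integrable f μ
  · rw [ofReal_integral_eq_lintegral_ofReal hfi (ae_of_all _ hf)]
  · rw [integral_undef hfi]; simp

lemma aux_jointAEMeas {Ω : Type} {mΩ : MeasurableSpace Ω} (P : Measure Ω)
    (W : Ω → ℝ → ℝ) (hmeas : ∀ t : ℝ, Measurable fun ω => W ω t)
    (hcont : ∀ᵐ ω ∂P, Continuous (W ω)) (μ' : Measure ℝ) [SFinite μ'] :
    AEMeasurable (fun p : Ω × ℝ => W p.1 p.2) (P.prod μ') := by
  have hfn : ∀ n : ℕ, Measurable (fun p : Ω × ℝ => W p.1 ((⌈p.2 * 2^n⌉ : ℤ) / 2^n)) := by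
    intro n
    have h1 : Measurable (fun q : Ω × ℤ => W q.1 ((q.2 : ℝ) / 2^n)) :=
      measurable_from_prod_countable_left (fun k => by simpa using hmeas ((k:ℝ)/2^n))
    have h2 : Measurable (fun p : Ω × ℝ => (p.1, ⌈p.2 * (2:ℝ)^n⌉)) :=
      measurable_fst.prodMk ((measurable_snd.mul_const _).ceil)
    exact h1.comp h2
  have hconv : ∀ (ω : Ω), Continuous (W ω) → ∀ s : ℝ,
      Tendsto (fun n : ℕ => W ω ((⌈s * 2^n⌉ : ℤ) / 2^n)) atTop (𝓝 (W ω s)) := by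
    intro ω hc s
    have hu : Tendsto (fun n : ℕ => ((⌈s * 2^n⌉ : ℤ) / 2^n : ℝ)) atTop (𝓝 s) := by
      have hlow : ∀ n : ℕ, s ≤ ((⌈s * 2^n⌉ : ℤ) / 2^n : ℝ) := by
        intro n
        rw [le_div_iff₀ (by positivity)]
        exact Int.le_ceil _
      have hhigh : ∀ n : ℕ, ((⌈s * 2^n⌉ : ℤ) / 2^n : ℝ) ≤ s + ((2:ℝ)^n)⁻¹ := by
        intro n
        rw [div_le_iff₀ (by positivity)]
        have := (Int.ceil_lt_add_one (s * 2^n)).le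
        calc ((⌈s * 2^n⌉ : ℤ) : ℝ) ≤ s * 2^n + 1 := this
          _ = (s + ((2:ℝ)^n)⁻¹) * 2^n := by field_simp
      have hlim : Tendsto (fun n : ℕ => s + ((2:ℝ)^n)⁻¹) atTop (𝓝 s) := by
        have h0 : Tendsto (fun n : ℕ => ((2:ℝ)^n)⁻¹) atTop (𝓝 0) := by
          simpa [Function.comp_def] using tendsto_inv_atTop_zero.comp
            (tendsto_pow_atTop_atTop_of_one_lt (by norm_num : (1:ℝ) < 2))
        simpa using tendsto_const_nhds.add h0
      exact tendsto_of_tendsto_of_tendsto_of_le_of_le tendsto_const_nhds hlim hlow hhigh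
    exact ((hc.tendsto s).comp hu)
  have hnull : (P.prod μ') {p : Ω × ℝ | ¬ Continuous (W p.1)} = 0 := by
    have hsub : {p : Ω × ℝ | ¬ Continuous (W p.1)} ⊆ {ω | ¬ Continuous (W ω)} ×ˢ (univ : Set ℝ) := by
      intro ⟨ω, s⟩ h; exact ⟨h, trivial⟩
    refine measure_mono_null hsub ?_
    rw [Measure.prod_prod]
    have : P {ω | ¬ Continuous (W ω)} = 0 := ae_iff.mp hcont
    simp [this]
  refine aemeasurable_of_tendsto_metrizable_ae atTop (fun n => (hfn n).aemeasurable) ?_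
  rw [ae_iff]
  refine measure_mono_null ?_ hnull
  intro p hp
  simp only [mem_setOf_eq] at hp ⊢
  intro hc
  exact hp (hconv p.1 hc p.2)

lemma aux_gauss_bound {Ω : Type} {mΩ : MeasurableSpace Ω} (P : Measure Ω)
    (s ε : ℝ) (hs : 0 < s)
    (G : ℝ → ℝ≥0∞) (hG : Measurable G)
    (X : Ω → ℝ) (hX : Measurable X) (hlaw : P.map X = gaussianReal 0 (Real.toNNReal s)) :
    ∫⁻ ω, G (ε⁻¹ * X ω) ∂P
      ≤ ENNReal.ofReal ((2 * Real.sqrt s)⁻¹) * ∫⁻ x, G (ε⁻¹ * x) := by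
  have hGc : Measurable fun x : ℝ => G (ε⁻¹ * x) := hG.comp (measurable_const_mul _)
  have h1 : ∫⁻ ω, G (ε⁻¹ * X ω) ∂P = ∫⁻ x, G (ε⁻¹ * x) ∂(gaussianReal 0 (Real.toNNReal s)) := by
    rw [← hlaw, lintegral_map hGc hX]
  have hv : Real.toNNReal s ≠ 0 := by
    simp only [ne_eq, Real.toNNReal_eq_zero, not_le]; exact hs
  rw [h1, gaussianReal_of_var_ne_zero _ hv,
    lintegral_withDensity_eq_lintegral_mul _ (measurable_gaussianPDF _ _) hGc]
  have hpdf : ∀ x : ℝ, gaussianPDF 0 (Real.toNNReal s) x ≤ ENNReal.ofReal ((2 * Real.sqrt s)⁻¹) := by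
    intro x
    simp only [gaussianPDF, gaussianPDFReal]
    apply ENNReal.ofReal_le_ofReal
    have hcoe : ((Real.toNNReal s : ℝ≥0) : ℝ) = s := Real.coe_toNNReal s hs.le
    rw [hcoe]
    have h2s : 2 * Real.sqrt s ≤ Real.sqrt (2 * Real.pi * s) := by
      have h4 : Real.sqrt (4 * s) = 2 * Real.sqrt s := by
        rw [show (4 : ℝ) * s = (2 * Real.sqrt s) ^ 2 by
          rw [mul_pow, Real.sq_sqrt hs.le]; ring]
        exact Real.sqrt_sq (by positivity)
      rw [← h4]
      apply Real.sqrt_le_sqrt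
      nlinarith [Real.pi_gt_three]
    have hpos : 0 < 2 * Real.sqrt s := by positivity
    calc (Real.sqrt (2 * Real.pi * s))⁻¹ * Real.exp (-(x - 0) ^ 2 / (2 * s))
        ≤ (Real.sqrt (2 * Real.pi * s))⁻¹ * 1 := by
          apply mul_le_mul_of_nonneg_left _ (by positivity)
          rw [Real.exp_le_one_iff]
          apply div_nonpos_of_nonpos_of_nonneg
          · simp [sq_nonneg]
          · positivity
      _ = (Real.sqrt (2 * Real.pi * s))⁻¹ := mul_one _
      _ ≤ (2 * Real.sqrt s)⁻¹ := inv_anti₀ hpos h2s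
  calc ∫⁻ x, (gaussianPDF 0 (Real.toNNReal s) * fun x => G (ε⁻¹ * x)) x
      ≤ ∫⁻ x, ENNReal.ofReal ((2 * Real.sqrt s)⁻¹) * G (ε⁻¹ * x) := by
        apply lintegral_mono; intro x
        exact mul_le_mul_left (hpdf x) _
    _ = ENNReal.ofReal ((2 * Real.sqrt s)⁻¹) * ∫⁻ x, G (ε⁻¹ * x) :=
        lintegral_const_mul' _ _ ENNReal.ofReal_ne_top

lemma aux_sqrt_int (t : ℝ) (ht : 0 < t) :
    ∫⁻ s in Ioc (0:ℝ) t, ENNReal.ofReal ((2 * Real.sqrt s)⁻¹)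
      ≤ ENNReal.ofReal (Real.sqrt t) := by
  have hcong : ∫⁻ s in Ioc (0:ℝ) t, ENNReal.ofReal ((2 * Real.sqrt s)⁻¹)
      = ∫⁻ s in Ioc (0:ℝ) t, ENNReal.ofReal (2⁻¹ * s ^ (-(1/2) : ℝ)) := by
    apply lintegral_congr_ae
    refine (ae_restrict_iff' measurableSet_Ioc).2 (ae_of_all _ fun s hs => ?_)
    show ENNReal.ofReal _ = ENNReal.ofReal _
    congr 1
    rw [mul_inv, Real.sqrt_eq_rpow, ← Real.rpow_neg hs.1.le]
  have hIccInt : IntegrableOn (fun s : ℝ => 2⁻¹ * s ^ (-(1/2) : ℝ)) (Ioc (0:ℝ) t) volume := by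
    have h1 : IntervalIntegrable (fun s : ℝ => s ^ (-(1/2) : ℝ)) volume 0 t :=
      intervalIntegral.intervalIntegrable_rpow' (by norm_num)
    have h2 := h1.const_mul (2⁻¹ : ℝ)
    rw [intervalIntegrable_iff_integrableOn_Ioc_of_le ht.le] at h2
    exact h2
  rw [hcong, ← ofReal_integral_eq_lintegral_ofReal hIccInt
    ((ae_restrict_iff' measurableSet_Ioc).2
      (ae_of_all _ fun s hs => mul_nonneg (by norm_num) (Real.rpow_nonneg hs.1.le _)))]
  apply ENNReal.ofReal_le_ofReal
  rw [← intervalIntegral.integral_of_le ht.le, intervalIntegral.integral_const_mul,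
    integral_rpow (Or.inl (by norm_num))]
  rw [show (-(1/2) : ℝ) + 1 = 1/2 by norm_num, Real.zero_rpow (by norm_num : (1/2:ℝ) ≠ 0),
    ← Real.sqrt_eq_rpow]
  rw [sub_zero]
  apply le_of_eq
  ring



/-- `sup_{ε>0} E[ε⁻¹ ∫₀ᵗ σ̂²(ε⁻¹W₁(s)) 𝟙_{|ε⁻¹W₁(s)|>N} ds] ≤ C ‖σ̂² 𝟙_{|x|>N}‖₁ √t` for an
absolute constant `C`; in particular, since `σ̂² ∈ L¹(ℝ)`, the bound tends to `0` as `N → ∞`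
uniformly in `ε`. -/
theorem tail_occupation_bound
    {Ω : Type} {mΩ : MeasurableSpace Ω} (P : Measure Ω) [IsProbabilityMeasure P]
    (W₁ : Ω → ℝ → ℝ) (hW₁ : IsBM P W₁)
    (σhat : ℝ → ℝ) (hσhat : Integrable σhat) (hσpos : ∀ x, 0 ≤ σhat x) :
    (∃ C : ℝ, 0 < C ∧ ∀ N : ℝ, 0 < N → ∀ t : ℝ, 0 < t → ∀ ε : ℝ, 0 < ε →
      (∫ ω, (ε⁻¹ * ∫ s in Icc (0:ℝ) t,
          indicator {x : ℝ | N < |x|} σhat (ε⁻¹ * W₁ ω s)) ∂P)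
        ≤ C * (∫ x : ℝ, |indicator {x : ℝ | N < |x|} σhat x|) * Real.sqrt t) ∧
    ∀ t : ℝ, 0 < t → ∀ δ : ℝ, 0 < δ → ∃ N₀ : ℝ, ∀ N : ℝ, N₀ ≤ N → ∀ ε : ℝ, 0 < ε →
      (∫ ω, (ε⁻¹ * ∫ s in Icc (0:ℝ) t,
          indicator {x : ℝ | N < |x|} σhat (ε⁻¹ * W₁ ω s)) ∂P) ≤ δ := by
  have hσae : AEMeasurable σhat (volume : Measure ℝ) := hσhat.1.aemeasurable
  set σm : ℝ → ℝ := hσae.mk σhat with hσm_def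
  have hσm_meas : Measurable σm := hσae.measurable_mk
  have hσm_ae : σhat =ᵐ[volume] σm := hσae.ae_eq_mk
  obtain ⟨E', hE'sub, hE'meas, hE'null⟩ := exists_measurable_superset_of_null (ae_iff.mp hσm_ae)
  have key : ∀ N : ℝ, 0 < N → ∀ t : ℝ, 0 < t → ∀ ε : ℝ, 0 < ε →
      (∫ ω, (ε⁻¹ * ∫ s in Icc (0:ℝ) t,
          indicator {x : ℝ | N < |x|} σhat (ε⁻¹ * W₁ ω s)) ∂P)
        ≤ 1 * (∫ x : ℝ, |indicator {x : ℝ | N < |x|} σhat x|) * Real.sqrt t := by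
    intro N hN t ht ε hε
    set S : Set ℝ := {x : ℝ | N < |x|} with hS_def
    have hS : MeasurableSet S := measurableSet_lt measurable_const measurable_abs
    set g : ℝ → ℝ := indicator S σhat with hg_def
    have hg_int : Integrable g := hσhat.indicator hS
    have hg_nonneg : ∀ x, 0 ≤ g x := fun x => indicator_nonneg (fun y _ => hσpos y) x
    set G : ℝ → ℝ≥0∞ := fun x => if x ∈ E' then ⊤ else ENNReal.ofReal (indicator S σm x)
      with hG_def
    have hG_meas : Measurable G :=
      Measurable.ite hE'meas measurable_const ((hσm_meas.indicator hS).ennreal_ofReal)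
    have hnotE : ∀ x ∉ E', σhat x = σm x := by
      intro x hx
      by_contra h
      exact hx (hE'sub h)
    have hind_eq : ∀ x ∉ E', indicator S σhat x = indicator S σm x := by
      intro x hx
      by_cases hxS : x ∈ S
      · simp [indicator_of_mem hxS, hnotE x hx]
      · simp [indicator_of_notMem hxS]
    have hGg : ∀ x, ENNReal.ofReal (g x) ≤ G x := by
      intro x
      by_cases hx : x ∈ E'
      · simp [hG_def, hx]
      · simp only [hG_def, hx, if_false]
        exact le_of_eq (by rw [hg_def, hind_eq x hx])
    have hI : ∫⁻ x, G x = ENNReal.ofReal (∫ x : ℝ, |g x|) := by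
      have h1 : G =ᵐ[volume] fun x => ENNReal.ofReal (g x) := by
        have hE'ae : ∀ᵐ x ∂(volume : Measure ℝ), x ∉ E' := by
          rw [ae_iff]; simpa using hE'null
        filter_upwards [hE'ae] with x hx
        simp only [hG_def, hx, if_false]
        rw [hg_def, hind_eq x hx]
      rw [lintegral_congr_ae h1,
        ← ofReal_integral_eq_lintegral_ofReal hg_int (ae_of_all _ hg_nonneg)]
      congr 1
      exact integral_congr_ae (ae_of_all _ fun x => (abs_of_nonneg (hg_nonneg x)).symm)
    have hscale : ∫⁻ x, G (ε⁻¹ * x) = ENNReal.ofReal ε * ∫⁻ x, G x := by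
      have hε' : (ε⁻¹ : ℝ) ≠ 0 := inv_ne_zero hε.ne'
      calc ∫⁻ x, G (ε⁻¹ * x) = ∫⁻ y, G y ∂(Measure.map (fun x => ε⁻¹ * x) volume) :=
            (lintegral_map hG_meas (measurable_const_mul ε⁻¹)).symm
        _ = ENNReal.ofReal |(ε⁻¹)⁻¹| * ∫⁻ x, G x := by
            rw [Real.map_volume_mul_left hε', lintegral_smul_measure, smul_eq_mul]
        _ = ENNReal.ofReal ε * ∫⁻ x, G x := by rw [inv_inv, abs_of_pos hε]
    have hlaw : ∀ s : ℝ, 0 ≤ s → P.map (fun ω => W₁ ω s) = gaussianReal 0 (Real.toNNReal s) := by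
      intro s hs
      have h := hW₁.2.2.2.1 0 s le_rfl hs
      simp only [hW₁.1, sub_zero] at h
      exact h
    have hWAE := aux_jointAEMeas P W₁ hW₁.2.1 hW₁.2.2.1 (volume.restrict (Ioc (0:ℝ) t))
    have hAE : AEMeasurable (Function.uncurry fun (ω : Ω) (s : ℝ) => G (ε⁻¹ * W₁ ω s))
        (P.prod (volume.restrict (Ioc (0:ℝ) t))) :=
      hG_meas.comp_aemeasurable (hWAE.const_mul ε⁻¹)
    set f : Ω → ℝ := fun ω => ε⁻¹ * ∫ s in Icc (0:ℝ) t, g (ε⁻¹ * W₁ ω s) with hf_def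
    have hf_nonneg : ∀ ω, 0 ≤ f ω := fun ω =>
      mul_nonneg (inv_nonneg.2 hε.le) (integral_nonneg fun s => hg_nonneg _)
    have hJ : 0 ≤ ∫ x : ℝ, |g x| := integral_nonneg fun x => abs_nonneg _
    have hRHS : 0 ≤ 1 * (∫ x : ℝ, |g x|) * Real.sqrt t := by positivity
    show ∫ ω, f ω ∂P ≤ _
    by_cases hfi : Integrable f P
    case neg => rw [integral_undef hfi]; exact hRHS
    rw [integral_eq_lintegral_of_nonneg_ae (ae_of_all _ hf_nonneg) hfi.1]
    apply ENNReal.toReal_le_of_le_ofReal hRHS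
    have hIccIoc : (volume.restrict (Icc (0:ℝ) t)) = volume.restrict (Ioc (0:ℝ) t) :=
      (Measure.restrict_congr_set Ioc_ae_eq_Icc).symm
    calc ∫⁻ ω, ENNReal.ofReal (f ω) ∂P
        ≤ ∫⁻ ω, (ENNReal.ofReal ε⁻¹ * ∫⁻ s in Ioc (0:ℝ) t, G (ε⁻¹ * W₁ ω s)) ∂P := by
          apply lintegral_mono
          intro ω
          show ENNReal.ofReal (ε⁻¹ * ∫ s in Icc (0:ℝ) t, g (ε⁻¹ * W₁ ω s))
            ≤ ENNReal.ofReal ε⁻¹ * ∫⁻ s in Ioc (0:ℝ) t, G (ε⁻¹ * W₁ ω s)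
          rw [ENNReal.ofReal_mul (inv_nonneg.2 hε.le)]
          apply mul_le_mul_right
          calc ENNReal.ofReal (∫ s in Icc (0:ℝ) t, g (ε⁻¹ * W₁ ω s))
              ≤ ∫⁻ s in Icc (0:ℝ) t, ENNReal.ofReal (g (ε⁻¹ * W₁ ω s)) :=
                aux_ofReal_int_le _ _ (fun s => hg_nonneg _)
            _ ≤ ∫⁻ s in Icc (0:ℝ) t, G (ε⁻¹ * W₁ ω s) := lintegral_mono fun s => hGg _
            _ = ∫⁻ s in Ioc (0:ℝ) t, G (ε⁻¹ * W₁ ω s) := by rw [hIccIoc]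
      _ = ENNReal.ofReal ε⁻¹ * ∫⁻ s in Ioc (0:ℝ) t, ∫⁻ ω, G (ε⁻¹ * W₁ ω s) ∂P := by
          rw [lintegral_const_mul' _ _ ENNReal.ofReal_ne_top]
          congr 1
          exact lintegral_lintegral_swap hAE
      _ ≤ ENNReal.ofReal ε⁻¹ * ∫⁻ s in Ioc (0:ℝ) t,
            ENNReal.ofReal ((2 * Real.sqrt s)⁻¹) * (ENNReal.ofReal ε * ∫⁻ x, G x) := by
          apply mul_le_mul_right
          apply lintegral_mono_ae
          refine (ae_restrict_iff' measurableSet_Ioc).2 (ae_of_all _ fun s hs => ?_)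
          calc ∫⁻ ω, G (ε⁻¹ * W₁ ω s) ∂P
              ≤ ENNReal.ofReal ((2 * Real.sqrt s)⁻¹) * ∫⁻ x, G (ε⁻¹ * x) :=
                aux_gauss_bound P s ε hs.1 G hG_meas _ (hW₁.2.1 s) (hlaw s hs.1.le)
            _ = _ := by rw [hscale]
      _ = ENNReal.ofReal ε⁻¹ * ((∫⁻ s in Ioc (0:ℝ) t, ENNReal.ofReal ((2 * Real.sqrt s)⁻¹))
            * (ENNReal.ofReal ε * ∫⁻ x, G x)) := by
          congr 1
          exact lintegral_mul_const' _ _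
            (by rw [hI]; exact ENNReal.mul_ne_top ENNReal.ofReal_ne_top ENNReal.ofReal_ne_top)
      _ ≤ ENNReal.ofReal ε⁻¹ * (ENNReal.ofReal (Real.sqrt t)
            * (ENNReal.ofReal ε * ∫⁻ x, G x)) := by
          apply mul_le_mul_right
          exact mul_le_mul_left (aux_sqrt_int t ht) _
      _ = ENNReal.ofReal (1 * (∫ x : ℝ, |g x|) * Real.sqrt t) := by
          rw [hI, ← ENNReal.ofReal_mul hε.le, ← ENNReal.ofReal_mul (Real.sqrt_nonneg t),
            ← ENNReal.ofReal_mul (inv_nonneg.2 hε.le)]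
          congr 1
          field_simp
  constructor
  · exact ⟨1, one_pos, key⟩
  intro t ht δ hδ
  have hSn : ∀ c : ℝ, MeasurableSet {x : ℝ | c < |x|} := fun c =>
    measurableSet_lt measurable_const measurable_abs
  have habs_int : ∀ c : ℝ, Integrable (fun x => |indicator {x : ℝ | c < |x|} σhat x|) :=
    fun c => (hσhat.indicator (hSn c)).abs
  have tail_tendsto : Tendsto (fun n : ℕ => ∫ x : ℝ, |indicator {x : ℝ | (n:ℝ) < |x|} σhat x|)
      atTop (𝓝 0) := by
    have h := tendsto_integral_of_dominated_convergence (μ := (volume : Measure ℝ))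
      (F := fun (n : ℕ) (x : ℝ) => |indicator {x : ℝ | (n:ℝ) < |x|} σhat x|)
      (f := fun _ => (0:ℝ)) (bound := fun x => |σhat x|)
      (fun n => (habs_int n).1)
      hσhat.abs
      (fun n => ae_of_all _ fun x => by
        rw [Real.norm_eq_abs, abs_abs]
        by_cases hx : x ∈ {x : ℝ | (n:ℝ) < |x|}
        · rw [indicator_of_mem hx]
        · rw [indicator_of_notMem hx]; simp)
      (ae_of_all _ fun x => by
        obtain ⟨n₀, hn₀⟩ := exists_nat_gt |x|
        refine tendsto_const_nhds.congr' ?_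
        rw [EventuallyEq, eventually_atTop]
        refine ⟨n₀, fun n hn => ?_⟩
        have hxn : x ∉ {x : ℝ | (n:ℝ) < |x|} := by
          simp only [mem_setOf_eq, not_lt]
          exact le_trans hn₀.le (by exact_mod_cast hn)
        show (0:ℝ) = |indicator {x : ℝ | (n:ℝ) < |x|} σhat x|
        rw [indicator_of_notMem hxn, abs_zero])
    simpa using h
  have h1 : 0 < δ / Real.sqrt t := div_pos hδ (Real.sqrt_pos.2 ht)
  obtain ⟨n, hn⟩ := ((tendsto_order.1 tail_tendsto).2 _ h1).exists
  refine ⟨max (n:ℝ) 1, fun N hN ε hε => ?_⟩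
  have hN1 : (1:ℝ) ≤ N := le_trans (le_max_right _ _) hN
  have hNn : (n:ℝ) ≤ N := le_trans (le_max_left _ _) hN
  have hN0 : 0 < N := lt_of_lt_of_le one_pos hN1
  refine (key N hN0 t ht ε hε).trans ?_
  have hmono : ∫ x : ℝ, |indicator {x : ℝ | N < |x|} σhat x|
      ≤ ∫ x : ℝ, |indicator {x : ℝ | (n:ℝ) < |x|} σhat x| := by
    apply integral_mono (habs_int N) (habs_int n)
    intro x
    show |indicator {x : ℝ | N < |x|} σhat x| ≤ |indicator {x : ℝ | (n:ℝ) < |x|} σhat x|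
    by_cases hx : x ∈ {x : ℝ | N < |x|}
    · have hx' : x ∈ {x : ℝ | (n:ℝ) < |x|} := lt_of_le_of_lt hNn hx
      rw [indicator_of_mem hx, indicator_of_mem hx']
    · rw [indicator_of_notMem hx, abs_zero]
      exact abs_nonneg _
  rw [one_mul]
  calc (∫ x : ℝ, |indicator {x : ℝ | N < |x|} σhat x|) * Real.sqrt t
      ≤ (δ / Real.sqrt t) * Real.sqrt t :=
        mul_le_mul_of_nonneg_right (hmono.trans hn.le) (Real.sqrt_nonneg t)
    _ = δ := div_mul_cancel₀ δ (Real.sqrt_pos.2 ht).ne'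

end PGS
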